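/- arXiv:1707.09581 — 6 statements merged into one kernel-verified Lean document; each statement's English description precedes it below -/
import Mathlib

section
/- Let P ≥ 1 be an integer, D = P² + 4, λ₁ = (P + √D)/2, λ₂ = (P − √D)/2, and define g : ℝ → ℂ by g(t) = (λ₁ : ℂ)^t + (λ₂ : ℂ)^t, where z^t denotes the principal complex power exp(t · Log z). Then for every real t, g(t)² − g(t−1)·g(t+1) = (P² + 4) · (−1 : ℂ)^t, where (−1 : ℂ)^t = exp(iπt) is the principal power; in particular this curve is a helix of ratio P² + 4 and pitch 2 (the P-Lucas helix). -/
/-- The P-Lucas helix: `g(t)² − g(t−1)·g(t+1) = (P²+4)·(−1)^t`, where `(−1 : ℂ)^t = exp(iπt)`,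
so this curve is a helix of ratio `P² + 4` and pitch 2. -/
theorem lucas_helix (P : ℤ) (hP : 1 ≤ P) (D : ℝ) (hD : D = (P : ℝ) ^ 2 + 4)
    (lam1 lam2 : ℝ) (hlam1 : lam1 = ((P : ℝ) + Real.sqrt D) / 2)
    (hlam2 : lam2 = ((P : ℝ) - Real.sqrt D) / 2)
    (g : ℝ → ℂ) (hg : ∀ t : ℝ, g t = (lam1 : ℂ) ^ (t : ℂ) + (lam2 : ℂ) ^ (t : ℂ)) :
    ∀ t : ℝ, g t ^ 2 - g (t - 1) * g (t + 1) = ((P : ℂ) ^ 2 + 4) * (-1 : ℂ) ^ (t : ℂ) ∧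
      (-1 : ℂ) ^ (t : ℂ) = Complex.exp (Real.pi * t * Complex.I) := by
  have hPpos : (0 : ℝ) < (P : ℝ) := by exact_mod_cast hP.trans_lt' (by norm_num)
  have hDpos : (0 : ℝ) < D := by nlinarith
  have hsq : Real.sqrt D ^ 2 = D := Real.sq_sqrt hDpos.le
  have hsqrt_gt : (P : ℝ) < Real.sqrt D := by
    nlinarith [Real.sqrt_nonneg D]
  have h1 : 0 < lam1 := by rw [hlam1]; nlinarith
  have h2 : lam2 < 0 := by rw [hlam2]; nlinarith
  have hprod : lam1 * lam2 = -1 := by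
    rw [hlam1, hlam2]; nlinarith
  have hdiff : lam1 - lam2 = Real.sqrt D := by rw [hlam1, hlam2]; ring
  have h1c : ((lam1 : ℂ)) ≠ 0 := by exact_mod_cast h1.ne'
  have h2c : ((lam2 : ℂ)) ≠ 0 := by exact_mod_cast h2.ne
  -- logs
  have hlog2 : Complex.log (lam2 : ℂ) = (Real.log (-lam2) : ℂ) + Real.pi * Complex.I := by
    have : ((lam2 : ℝ) : ℂ) = ((-lam2 : ℝ) : ℂ) * (-1) := by push_cast; ring
    rw [this, Complex.log_ofReal_mul (by linarith) (by norm_num), Complex.log_neg_one]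
  have hlog1 : Complex.log (lam1 : ℂ) = (Real.log lam1 : ℂ) :=
    (Complex.ofReal_log h1.le).symm
  have hlogsum : Complex.log (lam1 : ℂ) + Complex.log (lam2 : ℂ) = Real.pi * Complex.I := by
    rw [hlog1, hlog2]
    have hl : Real.log lam1 + Real.log (-lam2) = 0 := by
      rw [← Real.log_mul h1.ne' (by linarith : -lam2 ≠ 0),
        show lam1 * -lam2 = 1 by linarith [hprod], Real.log_one]
    have hlc : (Real.log lam1 : ℂ) + (Real.log (-lam2) : ℂ) = 0 := by exact_mod_cast hl
    linear_combination hlc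
  intro t
  have hneg : (-1 : ℂ) ^ (t : ℂ) = Complex.exp (Real.pi * t * Complex.I) := by
    rw [Complex.cpow_def_of_ne_zero (by norm_num) _, Complex.log_neg_one]
    ring_nf
  refine ⟨?_, hneg⟩
  have hAB : (lam1 : ℂ) ^ (t : ℂ) * (lam2 : ℂ) ^ (t : ℂ) = (-1 : ℂ) ^ (t : ℂ) := by
    rw [Complex.cpow_def_of_ne_zero h1c, Complex.cpow_def_of_ne_zero h2c, ← Complex.exp_add,
      hneg, ← add_mul, hlogsum]
    ring_nf
  have e1 : ∀ lam : ℝ, (lam : ℂ) ≠ 0 →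
      (lam : ℂ) ^ ((t : ℂ) + 1) = (lam : ℂ) ^ (t : ℂ) * lam := by
    intro lam h
    rw [Complex.cpow_add _ _ h, Complex.cpow_one]
  have e2 : ∀ lam : ℝ, (lam : ℂ) ≠ 0 →
      (lam : ℂ) ^ ((t : ℂ) - 1) = (lam : ℂ) ^ (t : ℂ) / lam := by
    intro lam h
    rw [Complex.cpow_sub _ _ h, Complex.cpow_one]
  have hpush : ((t : ℝ) - 1 : ℝ) = ((t : ℂ) - 1 : ℂ).re ∧ True := by simp
  rw [hg t, hg (t - 1), hg (t + 1)]
  push_cast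
  rw [e1 lam1 h1c, e1 lam2 h2c, e2 lam1 h1c, e2 lam2 h2c]
  set A := (lam1 : ℂ) ^ (t : ℂ)
  set B := (lam2 : ℂ) ^ (t : ℂ)
  have hDc : ((lam1 : ℂ) - lam2) ^ 2 = (P : ℂ) ^ 2 + 4 := by
    have : (lam1 - lam2) ^ 2 = (P : ℝ) ^ 2 + 4 := by rw [hdiff, hsq, hD]
    exact_mod_cast congrArg (fun x : ℝ => (x : ℂ)) this
  have hprodc : (lam1 : ℂ) * lam2 = -1 := by exact_mod_cast hprod
  have d1 : A / (lam1 : ℂ) = -(A * lam2) := by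
    rw [div_eq_iff h1c]; linear_combination A * hprodc
  have d2 : B / (lam2 : ℂ) = -(B * lam1) := by
    rw [div_eq_iff h2c]; linear_combination B * hprodc
  rw [d1, d2]
  linear_combination ((P : ℂ)^2+4) * hAB + (A+B)^2 * hprodc + A * B * hDc
end

section
/- Let P ≥ 1 be an integer, D = P² + 4, λ₁ = (P + √D)/2, λ₂ = (P − √D)/2, and define h : ℝ → ℂ by h(t) = ((λ₁ : ℂ)^t − (λ₂ : ℂ)^t)/√D, where z^t denotes the principal complex power exp(t · Log z). Then for every real t, h(t−1)·h(t+1) − h(t)² = (−1 : ℂ)^t, where (−1 : ℂ)^t = exp(iπt); in particular this curve is a helix of ratio 1 and pitch 2 (the P-Fibonacci helix). -/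
/-- The P-Fibonacci helix: `h(t−1)·h(t+1) − h(t)² = (−1)^t`, where `(−1 : ℂ)^t = exp(iπt)`,
so this curve is a helix of ratio 1 and pitch 2. -/
theorem fibonacci_helix (P : ℤ) (hP : 1 ≤ P) (D : ℝ) (hD : D = (P : ℝ) ^ 2 + 4)
    (lam1 lam2 : ℝ) (hlam1 : lam1 = ((P : ℝ) + Real.sqrt D) / 2)
    (hlam2 : lam2 = ((P : ℝ) - Real.sqrt D) / 2)
    (h : ℝ → ℂ)
    (hh : ∀ t : ℝ, h t = ((lam1 : ℂ) ^ (t : ℂ) - (lam2 : ℂ) ^ (t : ℂ)) / (Real.sqrt D : ℂ)) :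
    ∀ t : ℝ, h (t - 1) * h (t + 1) - h t ^ 2 = (-1 : ℂ) ^ (t : ℂ) ∧
      (-1 : ℂ) ^ (t : ℂ) = Complex.exp (Real.pi * t * Complex.I) := by
  intro t
  have hP1 : (1 : ℝ) ≤ (P : ℝ) := by exact_mod_cast hP
  set s : ℝ := Real.sqrt D with hsdef
  have hDpos : 0 < D := by nlinarith
  have hs2 : s ^ 2 = D := Real.sq_sqrt hDpos.le
  have hspos : 0 < s := Real.sqrt_pos.mpr hDpos
  have hsP : (P : ℝ) < s := by nlinarith
  have hl1 : 0 < lam1 := by rw [hlam1]; linarith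
  have hl2 : lam2 < 0 := by rw [hlam2]; linarith
  have hprod : lam1 * lam2 = -1 := by
    rw [hlam1, hlam2]
    have : ((P:ℝ) + s) / 2 * (((P:ℝ) - s) / 2) = ((P:ℝ)^2 - s^2) / 4 := by ring
    rw [this, hs2, hD]; ring
  have hdiff : lam1 - lam2 = s := by rw [hlam1, hlam2]; ring
  -- complex power facts
  have hl1ne : (lam1 : ℂ) ≠ 0 := by exact_mod_cast hl1.ne'
  have hl2ne : (lam2 : ℂ) ≠ 0 := by exact_mod_cast hl2.ne
  have hsne : (s : ℂ) ≠ 0 := by exact_mod_cast hspos.ne'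
  have hlog1 : Complex.log (lam1 : ℂ) = (Real.log lam1 : ℂ) :=
    (Complex.ofReal_log hl1.le).symm
  have hlog2 : Complex.log (lam2 : ℂ) = (Real.log (-lam2) : ℂ) + Real.pi * Complex.I := by
    simp only [Complex.log]
    rw [Complex.norm_real, Real.norm_eq_abs, abs_of_neg hl2, Complex.arg_ofReal_of_neg hl2]
  have hlogsum : Real.log lam1 + Real.log (-lam2) = 0 := by
    rw [← Real.log_mul hl1.ne' (by linarith)]
    rw [show lam1 * -lam2 = -(lam1 * lam2) by ring, hprod]
    simp
  have e1 : (lam1 : ℂ) ^ (t : ℂ) = Complex.exp ((Real.log lam1 : ℂ) * t) := by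
    rw [Complex.cpow_def_of_ne_zero hl1ne, hlog1]
  have e2 : (lam2 : ℂ) ^ (t : ℂ) =
      Complex.exp (((Real.log (-lam2) : ℂ) + Real.pi * Complex.I) * t) := by
    rw [Complex.cpow_def_of_ne_zero hl2ne, hlog2]
  have eneg : (-1 : ℂ) ^ (t : ℂ) = Complex.exp (Real.pi * t * Complex.I) := by
    rw [Complex.cpow_def_of_ne_zero (by norm_num), Complex.log_neg_one]
    ring_nf
  have hprodpow : (lam1 : ℂ) ^ (t : ℂ) * (lam2 : ℂ) ^ (t : ℂ) = (-1 : ℂ) ^ (t : ℂ) := by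
    rw [e1, e2, eneg, ← Complex.exp_add]
    congr 1
    have : ((Real.log lam1 : ℝ) : ℂ) + ((Real.log (-lam2) : ℝ) : ℂ) = 0 := by
      exact_mod_cast hlogsum
    linear_combination (t : ℂ) * this
  -- shift formulas
  have hm : ((t - 1 : ℝ) : ℂ) = (t : ℂ) + (-1) := by push_cast; ring
  have hp : ((t + 1 : ℝ) : ℂ) = (t : ℂ) + 1 := by push_cast; ring
  have sh1m : (lam1 : ℂ) ^ ((t - 1 : ℝ) : ℂ) = (lam1 : ℂ) ^ (t : ℂ) * (lam1 : ℂ)⁻¹ := by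
    rw [hm, Complex.cpow_add _ _ hl1ne, Complex.cpow_neg_one]
  have sh1p : (lam1 : ℂ) ^ ((t + 1 : ℝ) : ℂ) = (lam1 : ℂ) ^ (t : ℂ) * (lam1 : ℂ) := by
    rw [hp, Complex.cpow_add _ _ hl1ne, Complex.cpow_one]
  have sh2m : (lam2 : ℂ) ^ ((t - 1 : ℝ) : ℂ) = (lam2 : ℂ) ^ (t : ℂ) * (lam2 : ℂ)⁻¹ := by
    rw [hm, Complex.cpow_add _ _ hl2ne, Complex.cpow_neg_one]
  have sh2p : (lam2 : ℂ) ^ ((t + 1 : ℝ) : ℂ) = (lam2 : ℂ) ^ (t : ℂ) * (lam2 : ℂ) := by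
    rw [hp, Complex.cpow_add _ _ hl2ne, Complex.cpow_one]
  have hprodC : (lam1 : ℂ) * (lam2 : ℂ) = -1 := by exact_mod_cast hprod
  have hinv1 : (lam1 : ℂ)⁻¹ = -(lam2 : ℂ) :=
    inv_eq_of_mul_eq_one_right (by linear_combination -hprodC)
  have hinv2 : (lam2 : ℂ)⁻¹ = -(lam1 : ℂ) :=
    inv_eq_of_mul_eq_one_right (by linear_combination -hprodC)
  have hsq : (lam1 : ℂ) ^ 2 + (lam2 : ℂ) ^ 2 + 2 = (s : ℂ) ^ 2 := by
    have hR : lam1 ^ 2 + lam2 ^ 2 + 2 = s ^ 2 := by nlinarith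
    exact_mod_cast hR
  refine ⟨?_, eneg⟩
  rw [hh, hh, hh, sh1m, sh1p, sh2m, sh2p, hinv1, hinv2, ← hprodpow]
  set a := (lam1 : ℂ) ^ (t : ℂ) with ha
  set b := (lam2 : ℂ) ^ (t : ℂ) with hb
  have key : (a * -(lam2:ℂ) - b * -(lam1:ℂ)) * (a * (lam1:ℂ) - b * (lam2:ℂ)) - (a - b) ^ 2
      = a * b * (s:ℂ) ^ 2 := by
    linear_combination a * b * hsq - (a ^ 2 + b ^ 2) * hprodC
  rw [div_mul_div_comm, div_pow, show (s:ℂ) * (s:ℂ) = (s:ℂ) ^ 2 by ring, ← sub_div, key,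
    mul_div_assoc, div_self (pow_ne_zero 2 hsne), mul_one]
end

section
/- Let P ≥ 1 be an integer, D = P² + 4, λ₁ = (P + √D)/2, λ₂ = (P − √D)/2, and define g(t) = (λ₁ : ℂ)^t + (λ₂ : ℂ)^t and h(t) = ((λ₁ : ℂ)^t − (λ₂ : ℂ)^t)/√D using principal complex powers. Then for every real t, g(t)² − D·h(t)² = 4 · (−1 : ℂ)^t, where (−1 : ℂ)^t = exp(iπt); in particular the map ψ₃(t) = g(t)² − D·h(t)² is representable as a helix of ratio 4 and pitch 2 (the Pell helix). -/
/-- The Pell helix: `g(t)² − D·h(t)² = 4·(−1)^t`, where `(−1 : ℂ)^t = exp(iπt)`;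
hence `ψ₃(t) = g(t)² − D·h(t)²` is representable as a helix of ratio 4 and pitch 2. -/
theorem pell_helix (P : ℤ) (hP : 1 ≤ P) (D : ℝ) (hD : D = (P : ℝ) ^ 2 + 4)
    (lam1 lam2 : ℝ) (hlam1 : lam1 = ((P : ℝ) + Real.sqrt D) / 2)
    (hlam2 : lam2 = ((P : ℝ) - Real.sqrt D) / 2)
    (g h : ℝ → ℂ)
    (hg : ∀ t : ℝ, g t = (lam1 : ℂ) ^ (t : ℂ) + (lam2 : ℂ) ^ (t : ℂ))
    (hh : ∀ t : ℝ, h t = ((lam1 : ℂ) ^ (t : ℂ) - (lam2 : ℂ) ^ (t : ℂ)) / (Real.sqrt D : ℂ)) :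
    ∀ t : ℝ, g t ^ 2 - (D : ℂ) * h t ^ 2 = 4 * (-1 : ℂ) ^ (t : ℂ) ∧
      (-1 : ℂ) ^ (t : ℂ) = Complex.exp (Real.pi * t * Complex.I) := by
  intro t
  have hPpos : (0 : ℝ) < (P : ℝ) := by exact_mod_cast hP
  have hDpos : (0 : ℝ) < D := by nlinarith
  have hs : Real.sqrt D ^ 2 = D := Real.sq_sqrt hDpos.le
  have hsnn : 0 ≤ Real.sqrt D := Real.sqrt_nonneg D
  have hPs : (P : ℝ) < Real.sqrt D := by
    nlinarith [hs, hsnn]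
  have hlam1pos : 0 < lam1 := by rw [hlam1]; linarith
  have hlam2neg : lam2 < 0 := by rw [hlam2]; linarith
  have hprod : lam1 * (-lam2) = 1 := by
    rw [hlam1, hlam2]; nlinarith [hs]
  -- exponent for the negative base
  have hlog2 : Complex.log (lam2 : ℂ) = (Real.log (-lam2) : ℂ) + Real.pi * Complex.I := by
    have h2 : (lam2 : ℂ) = ((-lam2 : ℝ) : ℂ) * (-1 : ℂ) := by push_cast; ring
    rw [h2, Complex.log_ofReal_mul (by linarith) (by norm_num), Complex.log_neg_one]
  have hlog1 : Complex.log (lam1 : ℂ) = (Real.log lam1 : ℂ) :=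
    (Complex.ofReal_log hlam1pos.le).symm
  have hlogsum : Complex.log (lam1 : ℂ) + Complex.log (lam2 : ℂ) = Real.pi * Complex.I := by
    rw [hlog1, hlog2]
    have : Real.log lam1 + Real.log (-lam2) = 0 := by
      rw [← Real.log_mul (ne_of_gt hlam1pos) (by linarith), hprod, Real.log_one]
    rw [← add_assoc, ← Complex.ofReal_add, this]; simp
  have hne1 : (lam1 : ℂ) ≠ 0 := by exact_mod_cast ne_of_gt hlam1pos
  have hne2 : (lam2 : ℂ) ≠ 0 := by exact_mod_cast ne_of_lt hlam2neg
  have hab : (lam1 : ℂ) ^ (t : ℂ) * (lam2 : ℂ) ^ (t : ℂ)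
      = Complex.exp (Real.pi * t * Complex.I) := by
    rw [Complex.cpow_def_of_ne_zero hne1, Complex.cpow_def_of_ne_zero hne2,
      ← Complex.exp_add, ← add_mul, hlogsum]
    congr 1; ring
  have hneg : (-1 : ℂ) ^ (t : ℂ) = Complex.exp (Real.pi * t * Complex.I) := by
    rw [Complex.cpow_def_of_ne_zero (by norm_num) , Complex.log_neg_one]; congr 1; ring
  refine ⟨?_, hneg⟩
  have hsD : ((Real.sqrt D : ℂ)) ^ 2 = (D : ℂ) := by
    exact_mod_cast congrArg (fun x : ℝ => (x : ℂ)) hs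
  have hsne : (Real.sqrt D : ℂ) ≠ 0 := by
    exact_mod_cast (Real.sqrt_pos.mpr hDpos).ne'
  rw [hg, hh, hneg]
  field_simp
  rw [← hab, ← hsD]
  ring
end

section
/- Let P ≥ 1 be an integer and let L, F : ℤ → ℤ satisfy L 0 = 2, L 1 = P, F 0 = 0, F 1 = 1 and the recurrence x (n+2) = P·x (n+1) + x n for all integers n. Then for every integer k, (L k)² − (P² + 3)·(F k)² − (F (k−1))·(F (k+1)) = 3·(−1)^k. -/
/-- `L k ² − (P²+3)·F k ² − F (k−1)·F (k+1) = 3·(−1)^k` for all integers `k`. -/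
theorem psi6_identity (P : ℤ) (hP : 1 ≤ P)
    (L F : ℤ → ℤ) (hL0 : L 0 = 2) (hL1 : L 1 = P) (hF0 : F 0 = 0) (hF1 : F 1 = 1)
    (hLrec : ∀ n : ℤ, L (n + 2) = P * L (n + 1) + L n)
    (hFrec : ∀ n : ℤ, F (n + 2) = P * F (n + 1) + F n) :
    ∀ k : ℤ, (L k) ^ 2 - (P ^ 2 + 3) * (F k) ^ 2 - F (k - 1) * F (k + 1) =
      3 * (((-1 : ℤˣ) ^ k : ℤˣ) : ℤ) := by
  have hF' : ∀ n : ℤ, F (n + 1) = P * F n + F (n - 1) := by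
    intro n
    have := hFrec (n - 1)
    rw [show n - 1 + 2 = n + 1 by ring, show n - 1 + 1 = n by ring] at this
    exact this
  have hL' : ∀ n : ℤ, L (n + 1) = P * L n + L (n - 1) := by
    intro n
    have := hLrec (n - 1)
    rw [show n - 1 + 2 = n + 1 by ring, show n - 1 + 1 = n by ring] at this
    exact this
  have hFm1 : F (-1) = 1 := by
    have h := hF' 0
    rw [show (0:ℤ) + 1 = 1 from rfl, show (0:ℤ) - 1 = -1 by norm_num, hF0, hF1] at h
    linarith
  have hF2 : F 2 = P := by
    have h := hFrec 0
    rw [show (0:ℤ) + 2 = 2 from rfl, show (0:ℤ) + 1 = 1 from rfl, hF0, hF1] at h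
    linarith
  -- key unit fact
  have key : ∀ m : ℤ, (((-1 : ℤˣ) ^ (m + 1) : ℤˣ) : ℤ) = -(((-1 : ℤˣ) ^ m : ℤˣ) : ℤ) := by
    intro m
    rw [zpow_add_one]
    simp
  -- L k = F (k+1) + F (k-1)
  have hLF : ∀ k : ℤ, L k = F (k + 1) + F (k - 1) ∧ L (k + 1) = F (k + 2) + F k := by
    intro k
    induction k using Int.induction_on with
    | zero =>
      constructor
      · norm_num [hL0, hF1, hFm1]
      · norm_num [hL1, hF0, hF2]
    | succ n ih =>
      obtain ⟨ih1, ih2⟩ := ih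
      refine ⟨by rw [show (n:ℤ) + 1 + 1 = n + 2 by ring, show (n:ℤ) + 1 - 1 = n by ring]; exact ih2, ?_⟩
      rw [show (n : ℤ) + 1 + 1 = n + 2 by ring, show (n : ℤ) + 1 + 2 = n + 3 by ring]
      have r1 := hLrec n
      have r2 := hFrec (n + 1)
      have r3 := hF' n
      rw [show (n : ℤ) + 1 + 2 = n + 3 by ring] at r2
      rw [r1, ih1, ih2, r2, r3]
      ring
    | pred n ih =>
      obtain ⟨ih1, ih2⟩ := ih
      constructor
      · have r1 := hL' (-n)
        have r1' : L (-(n:ℤ) - 1) = L (-n + 1) - P * L (-n) := by linarith [r1]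
        rw [show (-(n:ℤ) - 1) + 1 = -n by ring, show (-(n:ℤ) - 1) - 1 = -n - 2 by ring,
          r1', ih2, ih1]
        have r4 := hFrec (-n)
        have r5 := hF' (-n - 1)
        rw [show -(n:ℤ) - 1 + 1 = -n by ring, show -(n:ℤ) - 1 - 1 = -n - 2 by ring] at r5
        linarith [r4, r5]
      · simp only [show (-(n:ℤ) - 1) + 1 = -n by ring, show (-(n:ℤ) - 1) + 2 = -n + 1 by ring]
        exact ih1
  -- Catalan identity
  have hCat : ∀ k : ℤ, F (k - 1) * F (k + 1) - (F k) ^ 2 = (((-1 : ℤˣ) ^ k : ℤˣ) : ℤ) := by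
    intro k
    induction k using Int.induction_on with
    | zero => norm_num [hF0, hF1, hFm1]
    | succ n ih =>
      rw [show (n : ℤ) + 1 - 1 = n by ring, show (n : ℤ) + 1 + 1 = n + 2 by ring]
      have r1 := hFrec n
      have r2 := hF' n
      rw [key n]
      linear_combination F n * r1 - F (n + 1) * r2 - ih
    | pred n ih =>
      rw [show (-(n:ℤ) - 1) - 1 = -n - 2 by ring, show (-(n:ℤ) - 1) + 1 = -n by ring]
      have r1 := hF' (-n)
      have r2 := hF' (-n - 1)
      rw [show -(n:ℤ) - 1 + 1 = -n by ring, show -(n:ℤ) - 1 - 1 = -n - 2 by ring] at r2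
      have hu : (((-1 : ℤˣ) ^ (-(n:ℤ) - 1) : ℤˣ) : ℤ) = -(((-1 : ℤˣ) ^ (-(n:ℤ)) : ℤˣ) : ℤ) := by
        have h := key (-(n:ℤ) - 1)
        rw [show -(n:ℤ) - 1 + 1 = -n by ring] at h
        linarith
      rw [hu]
      linear_combination F (-n - 1) * r1 - F (-n) * r2 - ih
  intro k
  have h1 := (hLF k).1
  have h2 := hCat k
  have h3 := hF' k
  rw [h1]
  linear_combination 3 * h2 + (F (k + 1) - F (k - 1) + P * F k) * h3
end

section
/- Let P ≥ 1 be an integer, D = P² + 4, λ₁ = (P + √D)/2, λ₂ = (P − √D)/2, and define g(t) = (λ₁ : ℂ)^t + (λ₂ : ℂ)^t and h(t) = ((λ₁ : ℂ)^t − (λ₂ : ℂ)^t)/√D using principal complex powers. Then for every real t, g(t)² − g(t−1)·g(t+1) − (P² + 3)·(h(t−1)·h(t+1) − h(t)²) = (−1 : ℂ)^t, where (−1 : ℂ)^t = exp(iπt); in particular this map is representable as a helix of ratio 1 and pitch 2. -/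
open Complex in
/-- `g(t)² − g(t−1)·g(t+1) − (P²+3)·(h(t−1)·h(t+1) − h(t)²) = (−1)^t`, where
`(−1 : ℂ)^t = exp(iπt)`; hence this map is representable as a helix of ratio 1 and pitch 2. -/
theorem psi4_helix (P : ℤ) (hP : 1 ≤ P) (D : ℝ) (hD : D = (P : ℝ) ^ 2 + 4)
    (lam1 lam2 : ℝ) (hlam1 : lam1 = ((P : ℝ) + Real.sqrt D) / 2)
    (hlam2 : lam2 = ((P : ℝ) - Real.sqrt D) / 2)
    (g h : ℝ → ℂ)
    (hg : ∀ t : ℝ, g t = (lam1 : ℂ) ^ (t : ℂ) + (lam2 : ℂ) ^ (t : ℂ))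
    (hh : ∀ t : ℝ, h t = ((lam1 : ℂ) ^ (t : ℂ) - (lam2 : ℂ) ^ (t : ℂ)) / (Real.sqrt D : ℂ)) :
    ∀ t : ℝ, g t ^ 2 - g (t - 1) * g (t + 1)
        - ((P : ℂ) ^ 2 + 3) * (h (t - 1) * h (t + 1) - h t ^ 2) =
      (-1 : ℂ) ^ (t : ℂ) ∧
      (-1 : ℂ) ^ (t : ℂ) = Complex.exp (Real.pi * t * Complex.I) := by
  intro t
  have hPpos : (0 : ℝ) < (P : ℝ) := by exact_mod_cast hP
  have hDpos : (0 : ℝ) < D := by nlinarith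
  have hsD : Real.sqrt D ^ 2 = D := Real.sq_sqrt hDpos.le
  have hsPlt : (P : ℝ) < Real.sqrt D := by
    nlinarith [Real.sqrt_nonneg D]
  have hsDpos : (0 : ℝ) < Real.sqrt D := lt_trans hPpos hsPlt
  have hl1pos : (0 : ℝ) < lam1 := by rw [hlam1]; linarith
  have hl2neg : lam2 < 0 := by rw [hlam2]; linarith
  have hmul : lam1 * lam2 = -1 := by rw [hlam1, hlam2]; nlinarith
  have hsum : lam1 + lam2 = (P : ℝ) := by rw [hlam1, hlam2]; ring
  -- complex versions
  set c1 : ℂ := (lam1 : ℂ) with hc1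
  set c2 : ℂ := (lam2 : ℂ) with hc2
  have hc1ne : c1 ≠ 0 := Complex.ofReal_ne_zero.mpr hl1pos.ne'
  have hc2ne : c2 ≠ 0 := Complex.ofReal_ne_zero.mpr hl2neg.ne
  have hsne : ((Real.sqrt D : ℝ) : ℂ) ≠ 0 := Complex.ofReal_ne_zero.mpr hsDpos.ne'
  have hmulC : c1 * c2 = -1 := by
    rw [hc1, hc2, ← Complex.ofReal_mul, hmul]; norm_num
  have hsumC : c1 + c2 = (P : ℂ) := by
    rw [hc1, hc2, ← Complex.ofReal_add, hsum]; norm_num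
  have hs2C : ((Real.sqrt D : ℝ) : ℂ) ^ 2 = (P : ℂ) ^ 2 + 4 := by
    rw [← Complex.ofReal_pow, hsD, hD]; push_cast; ring
  set A : ℂ := c1 ^ (t : ℂ) with hA
  set B : ℂ := c2 ^ (t : ℂ) with hB
  -- shifted powers
  have e1p : c1 ^ ((t + 1 : ℝ) : ℂ) = A * c1 := by
    push_cast; rw [Complex.cpow_add _ _ hc1ne, Complex.cpow_one]
  have e1m : c1 ^ ((t - 1 : ℝ) : ℂ) = A * c1⁻¹ := by
    push_cast
    rw [sub_eq_add_neg, Complex.cpow_add _ _ hc1ne, Complex.cpow_neg_one]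
  have e2p : c2 ^ ((t + 1 : ℝ) : ℂ) = B * c2 := by
    push_cast; rw [Complex.cpow_add _ _ hc2ne, Complex.cpow_one]
  have e2m : c2 ^ ((t - 1 : ℝ) : ℂ) = B * c2⁻¹ := by
    push_cast
    rw [sub_eq_add_neg, Complex.cpow_add _ _ hc2ne, Complex.cpow_neg_one]
  -- product A * B = (-1)^t
  have hBexp : B = ((-lam2 : ℝ) : ℂ) ^ (t : ℂ) * Complex.exp ((Real.pi:ℂ) * Complex.I * t) := by
    rw [hB, hc2, Complex.ofReal_cpow_of_nonpos hl2neg.le]; norm_num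
  have hprod1 : A * ((-lam2 : ℝ) : ℂ) ^ (t : ℂ) = 1 := by
    rw [hA, hc1, ← Complex.mul_cpow_ofReal_nonneg hl1pos.le (by linarith),
      ← Complex.ofReal_mul, show lam1 * -lam2 = 1 by linarith [hmul]]
    simp
  have hneg1 : (-1 : ℂ) ^ (t : ℂ) = Complex.exp ((Real.pi:ℂ) * Complex.I * t) := by
    have : ((-1 : ℝ) : ℂ) ^ (t : ℂ) = ((1 : ℝ) : ℂ) ^ (t : ℂ) * Complex.exp ((Real.pi:ℂ) * Complex.I * t) := by
      simpa using Complex.ofReal_cpow_of_nonpos (by norm_num : (-1 : ℝ) ≤ 0) (t : ℂ)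
    simpa using this
  have hAB : A * B = (-1 : ℂ) ^ (t : ℂ) := by
    rw [hBexp, hneg1, ← mul_assoc, hprod1, one_mul]
  have hinv1 : c1⁻¹ = -c2 := by
    field_simp
    linear_combination hmulC
  have hinv2 : c2⁻¹ = -c1 := by
    field_simp
    linear_combination hmulC
  constructor
  · have hg2 : g t ^ 2 - g (t - 1) * g (t + 1) = A * B * ((P : ℂ) ^ 2 + 4) := by
      rw [hg, hg, hg, e1p, e1m, e2p, e2m, hinv1, hinv2]
      linear_combination (A ^ 2 + B ^ 2 - 2 * A * B) * hmulC +
        A * B * (c1 + c2 + (P : ℂ)) * hsumC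
    have hh2 : h (t - 1) * h (t + 1) - h t ^ 2 = A * B := by
      rw [hh, hh, hh, e1p, e1m, e2p, e2m, hinv1, hinv2]
      field_simp
      linear_combination -(A + B) ^ 2 * hmulC +
        A * B * (c1 + c2 + (P : ℂ)) * hsumC -
        A * B * hs2C + (A + c1 ^ (t : ℂ) - B - c2 ^ (t : ℂ)) * hA -
        (A + c1 ^ (t : ℂ) - B - c2 ^ (t : ℂ)) * hB
    rw [hg2, hh2, ← hAB]
    ring
  · rw [hneg1]
    ring_nf
end

section
/- Let P ≥ 1 be an integer, D = P² + 4, λ₁ = (P + √D)/2, λ₂ = (P − √D)/2, and define g(t) = (λ₁ : ℂ)^t + (λ₂ : ℂ)^t and h(t) = ((λ₁ : ℂ)^t − (λ₂ : ℂ)^t)/√D using principal complex powers. Then for every real t, g(t)² − (P² + 2)·h(t)² − 2·h(t−1)·h(t+1) = 2·(−1 : ℂ)^t, where (−1 : ℂ)^t = exp(iπt); in particular this map is representable as a helix of ratio 2 and pitch 2. -/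
open Complex in
lemma psi5_key (Pc L1 L2 s A B C : ℂ) (hL1 : L1 ≠ 0) (hL2 : L2 ≠ 0) (hs : s ≠ 0)
    (hsum : L1 + L2 = Pc) (hprod : L1 * L2 = -1) (hs2 : s ^ 2 = Pc ^ 2 + 4)
    (hAB : A * B = C) :
    (A + B) ^ 2 - (Pc ^ 2 + 2) * ((A - B) / s) ^ 2
      - 2 * ((A / L1 - B / L2) / s * ((A * L1 - B * L2) / s)) = 2 * C := by
  subst hsum hAB
  have hdiv : A / L1 - B / L2 = B * L1 - A * L2 := by
    field_simp
    linear_combination (A * L2 - B * L1) * hprod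
  rw [hdiv]
  have expand : (B * L1 - A * L2) * (A * L1 - B * L2)
      = A * B * ((L1 + L2) ^ 2 + 2) + A ^ 2 + B ^ 2 := by
    linear_combination (-(A + B) ^ 2) * hprod
  rw [div_mul_div_comm, expand, div_pow]
  field_simp
  linear_combination (A ^ 2 + B ^ 2) * hs2

/-- `g(t)² − (P²+2)·h(t)² − 2·h(t−1)·h(t+1) = 2·(−1)^t`, where `(−1 : ℂ)^t = exp(iπt)`;
hence this map is representable as a helix of ratio 2 and pitch 2. -/
theorem psi5_helix (P : ℤ) (hP : 1 ≤ P) (D : ℝ) (hD : D = (P : ℝ) ^ 2 + 4)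
    (lam1 lam2 : ℝ) (hlam1 : lam1 = ((P : ℝ) + Real.sqrt D) / 2)
    (hlam2 : lam2 = ((P : ℝ) - Real.sqrt D) / 2)
    (g h : ℝ → ℂ)
    (hg : ∀ t : ℝ, g t = (lam1 : ℂ) ^ (t : ℂ) + (lam2 : ℂ) ^ (t : ℂ))
    (hh : ∀ t : ℝ, h t = ((lam1 : ℂ) ^ (t : ℂ) - (lam2 : ℂ) ^ (t : ℂ)) / (Real.sqrt D : ℂ)) :
    ∀ t : ℝ, g t ^ 2 - ((P : ℂ) ^ 2 + 2) * h t ^ 2 - 2 * (h (t - 1) * h (t + 1)) =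
      2 * (-1 : ℂ) ^ (t : ℂ) ∧
      (-1 : ℂ) ^ (t : ℂ) = Complex.exp (Real.pi * t * Complex.I) := by
  intro t
  have hPR : (1 : ℝ) ≤ (P : ℝ) := by exact_mod_cast hP
  have hD0 : (0 : ℝ) < D := by nlinarith
  have hsq : Real.sqrt D ^ 2 = (P : ℝ) ^ 2 + 4 := by
    rw [Real.sq_sqrt hD0.le, hD]
  have hsqrt0 : 0 < Real.sqrt D := Real.sqrt_pos.mpr hD0
  have hPltsqrt : (P : ℝ) < Real.sqrt D := by nlinarith
  have hl1 : 0 < lam1 := by rw [hlam1]; nlinarith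
  have hl2 : lam2 < 0 := by rw [hlam2]; nlinarith
  have hprod : lam1 * lam2 = -1 := by
    rw [hlam1, hlam2]; linear_combination (-1/4 : ℝ) * hsq
  have hsum : lam1 + lam2 = (P : ℝ) := by rw [hlam1, hlam2]; ring
  have hL1 : (lam1 : ℂ) ≠ 0 := by exact_mod_cast hl1.ne'
  have hL2 : (lam2 : ℂ) ≠ 0 := by exact_mod_cast hl2.ne
  have hs : ((Real.sqrt D : ℝ) : ℂ) ≠ 0 := by exact_mod_cast hsqrt0.ne'
  have hsumC : (lam1 : ℂ) + (lam2 : ℂ) = (P : ℂ) := by exact_mod_cast hsum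
  have hprodC : (lam1 : ℂ) * (lam2 : ℂ) = -1 := by exact_mod_cast hprod
  have hs2C : ((Real.sqrt D : ℝ) : ℂ) ^ 2 = (P : ℂ) ^ 2 + 4 := by exact_mod_cast hsq
  -- the exponential identity
  have hexp : (-1 : ℂ) ^ (t : ℂ) = Complex.exp (Real.pi * t * Complex.I) := by
    rw [Complex.cpow_def_of_ne_zero (by norm_num) _, Complex.log_neg_one]
    ring_nf
  -- product of the two powers
  have hAB : (lam1 : ℂ) ^ (t : ℂ) * (lam2 : ℂ) ^ (t : ℂ) = (-1 : ℂ) ^ (t : ℂ) := by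
    rw [Complex.ofReal_cpow_of_nonpos hl2.le]
    have h1 : ((-lam2 : ℝ) : ℂ) = -(lam2 : ℂ) := by push_cast; ring
    have h2 : (lam1 : ℂ) ^ (t : ℂ) * (-(lam2 : ℂ)) ^ (t : ℂ) = 1 := by
      rw [← h1, ← Complex.mul_cpow_ofReal_nonneg hl1.le (by linarith : (0:ℝ) ≤ -lam2),
        ← Complex.ofReal_mul]
      have : lam1 * -lam2 = 1 := by linarith [hprod]
      rw [this, Complex.ofReal_one, Complex.one_cpow]
    rw [Complex.cpow_def_of_ne_zero (by norm_num : (-1 : ℂ) ≠ 0), Complex.log_neg_one]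
    calc (lam1 : ℂ) ^ (t : ℂ) * ((-(lam2 : ℂ)) ^ (t : ℂ) * Complex.exp (Real.pi * Complex.I * t))
        = ((lam1 : ℂ) ^ (t : ℂ) * (-(lam2 : ℂ)) ^ (t : ℂ)) * Complex.exp (Real.pi * Complex.I * t) :=
          (mul_assoc _ _ _).symm
      _ = Complex.exp (Real.pi * Complex.I * t) := by rw [h2, one_mul]
  -- cpow shifts
  have hcast1 : ((t - 1 : ℝ) : ℂ) = (t : ℂ) - 1 := by push_cast; ring
  have hcast2 : ((t + 1 : ℝ) : ℂ) = (t : ℂ) + 1 := by push_cast; ring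
  have shift : ∀ (x : ℂ), x ≠ 0 →
      x ^ ((t - 1 : ℝ) : ℂ) = x ^ (t : ℂ) / x ∧ x ^ ((t + 1 : ℝ) : ℂ) = x ^ (t : ℂ) * x := by
    intro x hx
    constructor
    · rw [hcast1, Complex.cpow_sub _ _ hx, Complex.cpow_one]
    · rw [hcast2, Complex.cpow_add _ _ hx, Complex.cpow_one]
  obtain ⟨h1m, h1p⟩ := shift _ hL1
  obtain ⟨h2m, h2p⟩ := shift _ hL2
  refine ⟨?_, hexp⟩
  rw [hg, hh, hh, hh, h1m, h1p, h2m, h2p]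
  exact psi5_key (P : ℂ) _ _ _ _ _ _ hL1 hL2 hs hsumC hprodC hs2C hAB
end
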